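/- (Posterior concentration used in the analysis of UTS.) Let u be a positive integer, let s ∈ {0,1,…,u}, and let δ > 0 be such that s/u + δ/2 ≤ 1. If θ is a random variable with the Beta(s+1, u−s+1) distribution, then P(θ ≥ s/u + δ/2) ≤ exp(−u δ²/2); equivalently, ((u+1)!/(s!(u−s)!)) · ∫_{s/u+δ/2}^{1} t^{s} (1−t)^{u−s} dt ≤ exp(−u δ²/2). -/

import Mathlib

open Nat Real

lemma aux_log_one_sub (x : ℝ) (h0 : 0 ≤ x) (h1 : x < 1) :
    Real.log (1 - x) + 2 * x ^ 2 ≤ 0 := by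
  set f : ℝ → ℝ := fun y => Real.log (1 - y) + 2 * y ^ 2 with hf
  have key : AntitoneOn f (Set.Icc 0 x) := by
    apply antitoneOn_of_deriv_nonpos (convex_Icc 0 x)
    · apply ContinuousOn.add
      · apply ContinuousOn.log
        · fun_prop
        · intro y hy
          simp only [Set.mem_Icc] at hy
          nlinarith [hy.2]
      · fun_prop
    · intro y hy
      rw [interior_Icc] at hy
      obtain ⟨hy0, hyx⟩ := hy
      have h1y : (1:ℝ) - y ≠ 0 := by nlinarith
      apply DifferentiableAt.differentiableWithinAt
      apply DifferentiableAt.add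
      · exact ((differentiable_const (1:ℝ)).sub differentiable_id).differentiableAt.log h1y
      · fun_prop
    · intro y hy
      rw [interior_Icc, Set.mem_Ioo] at hy
      obtain ⟨hy0, hyx⟩ := hy
      have h1y : (0:ℝ) < 1 - y := by nlinarith
      have hd : HasDerivAt f (-(1/(1-y)) + 4 * y) y := by
        apply HasDerivAt.add
        · have := (Real.hasDerivAt_log h1y.ne').comp y (((hasDerivAt_id y).const_sub 1))
          simpa [Function.comp_def] using this.neg.neg
        · have : HasDerivAt (fun y : ℝ => 2 * y ^ 2) (2 * (2 * y)) y := by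
            exact ((hasDerivAt_pow 2 y).const_mul 2).congr_deriv (by ring)
          simpa [mul_comm] using this.congr_deriv (by ring)
      rw [hd.deriv]
      have h5 : 4*y ≤ 1/(1-y) := (le_div_iff₀ h1y).2 (by nlinarith [sq_nonneg (2*y-1)])
      linarith
  have := key (Set.left_mem_Icc.2 h0) (Set.right_mem_Icc.2 h0) h0
  simpa [hf] using this

lemma aux_pinsker (q x : ℝ) (hq0 : 0 < q) (hqx : q ≤ x) (hx1 : x < 1) :
    q * Real.log x + (1 - q) * Real.log (1 - x) + 2 * (x - q) ^ 2
      ≤ q * Real.log q + (1 - q) * Real.log (1 - q) := by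
  set f : ℝ → ℝ := fun y => q * Real.log y + (1 - q) * Real.log (1 - y) + 2 * (y - q) ^ 2 with hf
  have key : AntitoneOn f (Set.Icc q x) := by
    apply antitoneOn_of_deriv_nonpos (convex_Icc q x)
    · apply ContinuousOn.add
      apply ContinuousOn.add
      · apply ContinuousOn.mul continuousOn_const
        apply ContinuousOn.log (by fun_prop)
        intro y hy
        simp only [Set.mem_Icc] at hy
        nlinarith [hy.1]
      · apply ContinuousOn.mul continuousOn_const
        apply ContinuousOn.log (by fun_prop)
        intro y hy
        simp only [Set.mem_Icc] at hy
        nlinarith [hy.2]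
      · fun_prop
    · intro y hy
      rw [interior_Icc, Set.mem_Ioo] at hy
      obtain ⟨hy0, hyx⟩ := hy
      have hy0' : (0:ℝ) < y := lt_trans hq0 hy0
      have h1y : (1:ℝ) - y ≠ 0 := by nlinarith
      apply DifferentiableAt.differentiableWithinAt
      apply DifferentiableAt.add
      apply DifferentiableAt.add
      · exact (differentiableAt_id.log hy0'.ne').const_mul q
      · exact (((differentiable_const (1:ℝ)).sub differentiable_id).differentiableAt.log h1y).const_mul _
      · fun_prop
    · intro y hy
      rw [interior_Icc, Set.mem_Ioo] at hy
      obtain ⟨hyq, hyx⟩ := hy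
      have hy0 : (0:ℝ) < y := lt_trans hq0 hyq
      have h1y : (0:ℝ) < 1 - y := by nlinarith
      have hd : HasDerivAt f (q * y⁻¹ + (1 - q) * (-(1/(1-y))) + 4 * (y - q)) y := by
        apply HasDerivAt.add
        apply HasDerivAt.add
        · exact (Real.hasDerivAt_log hy0.ne').const_mul q
        · have := (Real.hasDerivAt_log h1y.ne').comp y (((hasDerivAt_id y).const_sub 1))
          have h2 : HasDerivAt (fun y : ℝ => Real.log (1 - y)) (-(1/(1-y))) y := by
            simpa [Function.comp_def] using this
          exact h2.const_mul _
        · have h3 : HasDerivAt (fun y : ℝ => (y - q)) 1 y := (hasDerivAt_id y).sub_const q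
          have := (h3.pow 2).const_mul 2
          exact this.congr_deriv (by ring)
      rw [hd.deriv]
      have hexpr : q * y⁻¹ + (1 - q) * (-(1/(1-y))) + 4 * (y - q)
          = (q * (1-y) - (1-q)*y + 4*(y-q)*(y*(1-y))) / (y * (1-y)) := by
        field_simp
        ring
      rw [hexpr]
      apply div_nonpos_of_nonpos_of_nonneg
      · nlinarith [mul_nonneg (sub_nonneg.2 hyq.le) (sq_nonneg (2*y-1))]
      · positivity
  have := key (Set.left_mem_Icc.2 hqx) (Set.right_mem_Icc.2 hqx) hqx
  simpa [hf] using this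

lemma beta_identity (u : ℕ) (x : ℝ) :
    ∀ s m : ℕ, s + m = u →
    ((u + 1)! : ℝ) * ∫ t in x..(1:ℝ), t ^ s * (1 - t) ^ m
      = (s ! : ℝ) * (m !) * ∑ j ∈ Finset.range (s + 1),
          ((u+1).choose j : ℝ) * x ^ j * (1 - x) ^ (u + 1 - j) := by
  intro s
  induction s with
  | zero =>
    intro m hm
    have hmu : m = u := by omega
    subst hmu
    have hint : ∫ t in x..(1:ℝ), t ^ 0 * (1 - t) ^ m = (1-x)^(m+1) / (m+1) := by
      simp only [pow_zero, one_mul]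
      have h1 : ∫ t in x..(1:ℝ), (1 - t) ^ m = ∫ t in ((1:ℝ)-1)..((1:ℝ)-x), t ^ m := by
        rw [← intervalIntegral.integral_comp_sub_left (fun t => t ^ m) 1]
      rw [h1]
      simp [integral_pow]
    rw [hint]
    simp only [Finset.sum_range_one, Nat.choose_zero_right, Nat.cast_one, pow_zero,
      Nat.factorial_zero, Nat.add_sub_cancel, one_mul, Nat.factorial_succ, zero_add, Nat.sub_zero]
    have : ((m:ℝ)+1) ≠ 0 := by positivity
    push_cast
    field_simp
  | succ s ih =>
    intro m hm
    have ihm : s + (m+1) = u := by omega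
    have hI := ih (m+1) ihm
    -- integration by parts
    have hm1 : ((m:ℝ)+1) ≠ 0 := by positivity
    have hdF : ∀ t ∈ Set.uIcc x (1:ℝ), HasDerivAt (fun t : ℝ => t ^ (s+1)) (((s:ℝ)+1) * t ^ s) t := by
      intro t _
      have := hasDerivAt_pow (s+1) t
      simpa using this
    have hdG : ∀ t ∈ Set.uIcc x (1:ℝ), HasDerivAt (fun t : ℝ => -((1-t) ^ (m+1)) / ((m:ℝ)+1)) ((1-t) ^ m) t := by
      intro t _
      have h1 : HasDerivAt (fun t : ℝ => (1-t)) (-1) t := (hasDerivAt_id t).const_sub 1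
      have h2 := (h1.pow (m+1)).neg.div_const ((m:ℝ)+1)
      apply h2.congr_deriv
      field_simp
      simp
    have hibp := intervalIntegral.integral_mul_deriv_eq_deriv_mul hdF hdG
      (by apply Continuous.intervalIntegrable; continuity)
      (by apply Continuous.intervalIntegrable; continuity)
    simp only [one_pow, sub_self, zero_pow (by omega : m+1 ≠ 0), neg_zero, zero_div, mul_zero] at hibp
    have hrw : ∫ t in x..(1:ℝ), ((s:ℝ)+1) * t ^ s * (-((1-t) ^ (m+1)) / ((m:ℝ)+1))
        = (-((s:ℝ)+1) / ((m:ℝ)+1)) * ∫ t in x..(1:ℝ), t ^ s * (1-t) ^ (m+1) := by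
      rw [← intervalIntegral.integral_const_mul]
      apply intervalIntegral.integral_congr
      intro t _
      field_simp
    rw [hrw] at hibp
    -- hibp : ∫ t^(s+1) (1-t)^m = 0 - x^(s+1) * (-(1-x)^(m+1)/(m+1)) - (-(s+1)/(m+1)) * I
    have hibp' : ((m:ℝ)+1) * (∫ t in x..(1:ℝ), t ^ (s+1) * (1 - t) ^ m)
        = x^(s+1)*(1-x)^(m+1) + ((s:ℝ)+1) * ∫ t in x..(1:ℝ), t ^ s * (1-t) ^ (m+1) := by
      field_simp at hibp
      linear_combination hibp
    rw [Finset.sum_range_succ]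
    have hfact : (((u+1).choose (s+1) : ℝ)) * ((s+1)! : ℝ) * ((m+1)! : ℝ) = ((u+1)! : ℝ) := by
      have h := Nat.choose_mul_factorial_mul_factorial (show s+1 ≤ u+1 by omega)
      rw [show u+1-(s+1) = m+1 from by omega] at h
      exact_mod_cast h
    have hcast : (u+1-(s+1)) = m+1 := by omega
    rw [hcast]
    push_cast [Nat.factorial_succ] at hfact hI ⊢
    apply mul_left_cancel₀ hm1
    linear_combination ((u:ℝ)+1) * (u ! : ℝ) * hibp' + ((s:ℝ)+1) * hI
      - (x^(s+1)*(1-x)^(m+1)) * hfact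

lemma binom_tail_le (n s : ℕ) (hsn : s < n) (x : ℝ) (hx0 : 0 ≤ x) (hx1 : x ≤ 1)
    (hq : (s:ℝ)/n ≤ x) :
    ∑ j ∈ Finset.range (s+1), ((n.choose j : ℝ)) * x ^ j * (1-x)^(n-j)
      ≤ Real.exp (-2 * n * (x - s/n)^2) := by
  have hn0 : (0:ℝ) < n := by
    have : 0 < n := by omega
    exact_mod_cast this
  rcases eq_or_lt_of_le hx1 with h1 | h1
  · subst h1
    rw [Finset.sum_eq_zero]
    · exact (Real.exp_pos _).le
    · intro j hj
      rw [Finset.mem_range] at hj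
      have : n - j ≠ 0 := by omega
      simp [this]
  · rcases Nat.eq_zero_or_pos s with hs0 | hs0
    · subst hs0
      have hA : Real.log (1-x) ≤ -2*x^2 := by
        have := aux_log_one_sub x hx0 h1
        linarith
      have hA2 : 1 - x ≤ Real.exp (-2*x^2) := by
        calc 1 - x = Real.exp (Real.log (1-x)) := (Real.exp_log (by linarith)).symm
        _ ≤ Real.exp (-2*x^2) := Real.exp_le_exp.2 hA
      have h3 : (1-x)^n ≤ (Real.exp (-2*x^2))^n := pow_le_pow_left₀ (by linarith) hA2 n
      have hgoal : ∑ j ∈ Finset.range (0+1), ((n.choose j:ℝ)) * x ^ j * (1-x)^(n-j)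
          = (1-x)^n := by
        rw [Finset.sum_range_one]; simp
      rw [hgoal, show ((0:ℕ):ℝ)/(n:ℝ) = 0 by simp, sub_zero]
      calc (1-x)^n ≤ (Real.exp (-2*x^2))^n := h3
        _ = Real.exp (-2 * n * x^2) := by
            rw [← Real.exp_nat_mul]; ring_nf
    · set q : ℝ := (s:ℝ)/n with hqdef
      have hq0 : 0 < q := by positivity
      have hq1 : q < 1 := by
        rw [hqdef, div_lt_one hn0]
        exact_mod_cast hsn
      have hx0' : 0 < x := lt_of_lt_of_le hq0 hq
      have h1x : (0:ℝ) < 1 - x := by linarith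
      have h1q : (0:ℝ) < 1 - q := by linarith
      set a : ℝ := x / q with hadef
      set b : ℝ := (1-x)/(1-q) with hbdef
      have ha1 : 1 ≤ a := (one_le_div hq0).2 hq
      have hb0 : 0 < b := by positivity
      have hb1 : b ≤ 1 := by
        rw [hbdef, div_le_one h1q]
        linarith
      have hba : b ≤ a := le_trans hb1 ha1
      set M : ℝ := a ^ s * b ^ (n - s) with hMdef
      have hM0 : 0 < M := by positivity
      -- termwise bound
      have hterm : ∀ j ∈ Finset.range (s+1),
          (n.choose j : ℝ) * x ^ j * (1-x)^(n-j)
            ≤ ((n.choose j : ℝ) * q ^ j * (1-q)^(n-j)) * M := by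
        intro j hj
        rw [Finset.mem_range] at hj
        have hjs : j ≤ s := by omega
        have hxj : x ^ j = q ^ j * a ^ j := by
          rw [← mul_pow, hadef, mul_div_cancel₀ _ hq0.ne']
        have hxnj : (1-x) ^ (n-j) = (1-q) ^ (n-j) * b ^ (n-j) := by
          rw [← mul_pow, hbdef, mul_div_cancel₀ _ h1q.ne']
        rw [hxj, hxnj]
        have key : a ^ j * b ^ (n-j) ≤ M := by
          have hb2 : b ^ (n-j) = b ^ (s-j) * b ^ (n-s) := by
            rw [← pow_add]; congr 1; omega
          have ha2 : a ^ s = a ^ j * a ^ (s-j) := by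
            rw [← pow_add]; congr 1; omega
          rw [hMdef, hb2, ha2]
          have h5 : b ^ (s-j) ≤ a ^ (s-j) := pow_le_pow_left₀ hb0.le hba _
          have h6 : a ^ j * b ^ (s-j) ≤ a ^ j * a ^ (s-j) :=
            mul_le_mul_of_nonneg_left h5 (by positivity)
          calc a ^ j * (b ^ (s-j) * b ^ (n-s)) = (a ^ j * b ^ (s-j)) * b ^ (n-s) := by ring
            _ ≤ (a ^ j * a ^ (s-j)) * b ^ (n-s) := mul_le_mul_of_nonneg_right h6 (by positivity)
        calc (n.choose j : ℝ) * (q ^ j * a ^ j) * ((1-q) ^ (n-j) * b ^ (n-j))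
            = ((n.choose j : ℝ) * q ^ j * (1-q)^(n-j)) * (a ^ j * b ^ (n-j)) := by ring
          _ ≤ ((n.choose j : ℝ) * q ^ j * (1-q)^(n-j)) * M :=
              mul_le_mul_of_nonneg_left key (by positivity)
      -- sum of the binomial weights is at most 1
      have hone : ∑ j ∈ Finset.range (n+1), (n.choose j : ℝ) * q^j * (1-q)^(n-j) = 1 := by
        have h7 := add_pow q (1-q) n
        have h8 : ∑ j ∈ Finset.range (n+1), (n.choose j : ℝ) * q^j * (1-q)^(n-j)
            = (q + (1-q))^n := by
          rw [h7]
          apply Finset.sum_congr rfl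
          intro j _
          ring
        rw [h8]
        norm_num
      have hsum1 : ∑ j ∈ Finset.range (s+1), (n.choose j : ℝ) * q^j * (1-q)^(n-j) ≤ 1 := by
        have hsub : ∑ j ∈ Finset.range (s+1), (n.choose j : ℝ) * q^j * (1-q)^(n-j)
            ≤ ∑ j ∈ Finset.range (n+1), (n.choose j : ℝ) * q^j * (1-q)^(n-j) := by
          apply Finset.sum_le_sum_of_subset_of_nonneg (Finset.range_subset_range.2 (by omega))
          intro j _ _
          positivity
        exact hsub.trans (le_of_eq hone)
      -- the bound M is at most the exponential
      have hMle : M ≤ Real.exp (-2 * n * (x - q)^2) := by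
        have hpin := aux_pinsker q x hq0 hq h1
        have hsq : (s:ℝ) = n * q := by
          rw [hqdef, mul_div_cancel₀ _ hn0.ne']
        have hlogM : Real.log M = (s:ℝ) * Real.log a + ((n:ℝ) - s) * Real.log b := by
          rw [hMdef, Real.log_mul (pow_ne_zero _ (by positivity)) (pow_ne_zero _ hb0.ne'),
            Real.log_pow, Real.log_pow, Nat.cast_sub hsn.le]
        have hlogle : Real.log M ≤ -2 * n * (x - q)^2 := by
          rw [hlogM, hadef, hbdef, Real.log_div hx0'.ne' hq0.ne', Real.log_div h1x.ne' h1q.ne']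
          have e : (s:ℝ)*(Real.log x - Real.log q) + ((n:ℝ)-s)*(Real.log (1-x) - Real.log (1-q))
              = (n:ℝ)*((q*Real.log x + (1-q)*Real.log (1-x) + 2*(x-q)^2)
                  - (q*Real.log q + (1-q)*Real.log (1-q))) - 2*n*(x-q)^2 := by
            rw [hsq]; ring
          rw [e]
          have h9 : (n:ℝ)*((q*Real.log x + (1-q)*Real.log (1-x) + 2*(x-q)^2)
              - (q*Real.log q + (1-q)*Real.log (1-q))) ≤ 0 :=
            mul_nonpos_of_nonneg_of_nonpos hn0.le (by linarith)
          linarith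
        calc M = Real.exp (Real.log M) := (Real.exp_log hM0).symm
          _ ≤ Real.exp (-2 * n * (x - q)^2) := Real.exp_le_exp.2 hlogle
      calc ∑ j ∈ Finset.range (s+1), ((n.choose j : ℝ)) * x ^ j * (1-x)^(n-j)
          ≤ ∑ j ∈ Finset.range (s+1), ((n.choose j : ℝ) * q ^ j * (1-q)^(n-j)) * M :=
            Finset.sum_le_sum hterm
        _ = (∑ j ∈ Finset.range (s+1), (n.choose j : ℝ) * q ^ j * (1-q)^(n-j)) * M :=
            (Finset.sum_mul _ _ _).symm
        _ ≤ 1 * M := mul_le_mul_of_nonneg_right hsum1 hM0.le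
        _ = M := one_mul M
        _ ≤ Real.exp (-2 * n * (x - q)^2) := hMle

/-- Posterior concentration for Beta posteriors: if `θ ∼ Beta(s+1, u−s+1)` with
`s ≤ u` observed successes out of `u` samples, then the posterior probability that
`θ` exceeds the empirical mean `s/u` by more than `δ/2` is at most `exp(−u δ²/2)`. -/
theorem beta_posterior_concentration (u : ℕ) (hu : 0 < u) (s : ℕ) (hs : s ≤ u)
    (δ : ℝ) (hδ : 0 < δ) (hle : (s : ℝ) / u + δ / 2 ≤ 1) :
    ((u + 1)! : ℝ) / ((s)! * (u - s)!) *
        ∫ t in ((s : ℝ) / u + δ / 2)..(1 : ℝ), t ^ s * (1 - t) ^ (u - s) ≤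
      Real.exp (-(u : ℝ) * δ ^ 2 / 2) := by
  set x : ℝ := (s : ℝ) / u + δ / 2 with hxdef
  have hu0 : (0:ℝ) < u := by exact_mod_cast hu
  have hx0 : 0 ≤ x := by
    have : (0:ℝ) ≤ (s:ℝ)/u := by positivity
    rw [hxdef]; linarith
  have hid := beta_identity u x s (u - s) (by omega)
  have hfacpos : (0:ℝ) < (s ! : ℝ) * ((u-s)! : ℝ) := by positivity
  set S : ℝ := ∑ j ∈ Finset.range (s + 1),
      ((u+1).choose j : ℝ) * x ^ j * (1 - x) ^ (u + 1 - j) with hSdef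
  have hL : ((u + 1)! : ℝ) / ((s)! * (u - s)!) *
      (∫ t in x..(1:ℝ), t ^ s * (1 - t) ^ (u - s)) = S := by
    rw [div_mul_eq_mul_div, hid]
    field_simp
  rw [hL]
  -- s/(u+1) ≤ x
  have hmono : (s:ℝ)/(u+1) ≤ (s:ℝ)/u := by
    apply div_le_div_of_nonneg_left ?_ hu0 (by linarith)
    positivity
  have hq : (s:ℝ)/((u:ℝ)+1) ≤ x := by
    rw [hxdef]; linarith
  have htail := binom_tail_le (u+1) s (by omega) x hx0 hle (by push_cast; exact hq)
  have hS : S ≤ Real.exp (-2 * ((u:ℝ)+1) * (x - (s:ℝ)/((u:ℝ)+1))^2) := by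
    rw [hSdef]
    convert htail using 3 <;> push_cast <;> ring
  apply hS.trans
  apply Real.exp_le_exp.2
  have hd : δ/2 ≤ x - (s:ℝ)/((u:ℝ)+1) := by
    rw [hxdef]; linarith
  have h2 : (δ/2)^2 ≤ (x - (s:ℝ)/((u:ℝ)+1))^2 := by
    apply pow_le_pow_left₀ (by positivity) hd
  nlinarith [sq_nonneg δ, hu0.le, h2]
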